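/- Let 𝒰 be a union closed set on Ω_n that is not sparse, i.e., the average cardinality of the non-empty members of 𝒰 is strictly greater than n/2 (equivalently, 2 · Σ_{A ∈ 𝒰, A ≠ ∅} |A| > n · |{A ∈ 𝒰 | A ≠ ∅}|). Then the union closed sets conjecture holds for 𝒰: there exists an element x ∈ Ω_n that belongs to at least half of the non-empty members of 𝒰. -/

import Mathlib

/-- A union closed set on `Ω_n`: a family of subsets of `Ω_n` closed under
pairwise unions that contains the full set `Ω_n` and the empty set. -/
def IsUCS {n : ℕ} (U : Finset (Finset (Fin n))) : Prop :=
  (∀ A ∈ U, ∀ B ∈ U, A ∪ B ∈ U) ∧ Finset.univ ∈ U ∧ ∅ ∈ U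

/-- If a union closed set `𝒰` on `Ω_n` is not sparse, i.e. the average
cardinality of its non-empty members is strictly greater than `n/2`
(equivalently `2 · Σ_{∅≠A∈𝒰} |A| > n · #{A ∈ 𝒰 | A ≠ ∅}`), then the union closed
sets conjecture holds for `𝒰`: some element `x ∈ Ω_n` belongs to at least half
of the non-empty members of `𝒰`. -/
theorem frankl_of_not_sparse {n : ℕ} (hn : 1 ≤ n)
    (U : Finset (Finset (Fin n))) (hU : IsUCS U)
    (hdense : n * (U.filter (fun A => A ≠ ∅)).card
      < 2 * ∑ A ∈ U.filter (fun A => A ≠ ∅), A.card) :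
    ∃ x : Fin n, (U.filter (fun A => A ≠ ∅)).card ≤ 2 * (U.filter (fun A => x ∈ A)).card := by
  by_contra h
  push_neg at h
  set S := U.filter (fun A => A ≠ ∅) with hS
  -- double counting
  have hsum : ∑ A ∈ S, A.card = ∑ x : Fin n, (U.filter (fun A => x ∈ A)).card := by
    have : ∀ A ∈ S, A.card = ∑ x : Fin n, if x ∈ A then 1 else 0 := by
      intro A _
      rw [Finset.sum_ite_mem, Finset.univ_inter, Finset.sum_const, smul_eq_mul, mul_one]
    rw [Finset.sum_congr rfl this, Finset.sum_comm]
    refine Finset.sum_congr rfl fun x _ => ?_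
    rw [hS, Finset.sum_filter, Finset.card_filter]
    refine Finset.sum_congr rfl fun A _ => ?_
    by_cases hx : x ∈ A
    · simp [hx, Finset.ne_empty_of_mem hx]
    · simp [hx]
  have hbound : ∀ x : Fin n, 2 * (U.filter (fun A => x ∈ A)).card + 1 ≤ S.card :=
    fun x => by
      refine Nat.lt_of_lt_of_le (h x) (le_of_eq (congrArg Finset.card ?_))
      rw [hS]; ext A; simp [Finset.nonempty_iff_ne_empty]
  have : 2 * ∑ A ∈ S, A.card + n ≤ n * S.card := by
    rw [hsum, Finset.mul_sum]
    calc ∑ x : Fin n, 2 * (U.filter (fun A => x ∈ A)).card + n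
        = ∑ x : Fin n, (2 * (U.filter (fun A => x ∈ A)).card + 1) := by
          rw [Finset.sum_add_distrib]; simp
      _ ≤ ∑ _x : Fin n, S.card := Finset.sum_le_sum fun x _ => hbound x
      _ = n * S.card := by simp [mul_comm]
  omega
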